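/- arXiv:1809.04613 — 2 statements merged into one kernel-verified Lean document; each statement's English description precedes it below -/
import Mathlib

section
/- For the stochastic mass action system with species $(A,B,C)$ and reactions $A+B\to B+C$, $B+C\to 2B$, $2B\to B+C$, $C\to A$: if $X_2(0)\geq 1$ and $X_1(0)+X_2(0)+X_3(0)\geq 2$, then every state reachable from $X(0)$ has $x_2\geq 1$, and no extinction set for any reaction is reachable from $X(0)$; in particular no extinction event can occur. -/
open Finset

/-- A state: copy-numbers of the `d` species. -/
abbrev State (d : ℕ) := Fin d → ℕ

/-- A reaction: a pair (source complex, product complex). -/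
abbrev Rxn (d : ℕ) := (State d) × (State d)

/-- A reaction with source `y` is active at `x` iff `x ≥ y` componentwise. -/
def active {d : ℕ} (y x : State d) : Prop := ∀ i, y i ≤ x i

/-- One-step reachability: from `x` jump to `x + y' - y` whenever `x ≥ y` for a reaction `y → y'`. -/
def step {d : ℕ} (R : List (Rxn d)) (x x' : State d) : Prop :=
  ∃ r ∈ R, active r.1 x ∧ ∀ i, x' i + r.1 i = x i + r.2 i

/-- Reachability: reflexive-transitive closure of one-step reachability. -/
def reach {d : ℕ} (R : List (Rxn d)) : State d → State d → Prop :=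
  Relation.ReflTransGen (step R)

/-- A set is closed if no state outside it is reachable from inside it. -/
def closedSet {d : ℕ} (R : List (Rxn d)) (Γ : Set (State d)) : Prop :=
  ∀ x ∈ Γ, ∀ x', reach R x x' → x' ∈ Γ

/-- An extinction set for a reaction: a closed set on which the reaction is never active. -/
def extinctionSet {d : ℕ} (R : List (Rxn d)) (r : Rxn d) (Γ : Set (State d)) : Prop :=
  closedSet R Γ ∧ ∀ x ∈ Γ, ¬ active r.1 x

/-- No extinction set for `r` is reachable from `x`. -/
def noExtSetReachable {d : ℕ} (R : List (Rxn d)) (r : Rxn d) (x : State d) : Prop :=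
  ∀ Γ : Set (State d), extinctionSet R r Γ → ∀ x' ∈ Γ, ¬ reach R x x'

/-- The network A+B → B+C, B+C → 2B, 2B → B+C, C → A. -/
def N3 : List (Rxn 3) :=
  [(![1,1,0], ![0,1,1]), (![0,1,1], ![0,2,0]), (![0,2,0], ![0,1,1]), (![0,0,1], ![1,0,0])]

lemma mem0 : ((![1,1,0], ![0,1,1]) : Rxn 3) ∈ N3 := by simp [N3]
lemma mem1 : ((![0,1,1], ![0,2,0]) : Rxn 3) ∈ N3 := by simp [N3]
lemma mem2 : ((![0,2,0], ![0,1,1]) : Rxn 3) ∈ N3 := by simp [N3]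
lemma mem3 : ((![0,0,1], ![1,0,0]) : Rxn 3) ∈ N3 := by simp [N3]

lemma step_inv {x x' : State 3} (h : step N3 x x') :
    x' 0 + x' 1 + x' 2 = x 0 + x 1 + x 2 ∧ (1 ≤ x 1 → 1 ≤ x' 1) := by
  obtain ⟨r, hr, ha, he⟩ := h
  have h0 := he 0; have h1 := he 1; have h2 := he 2
  have ha0 := ha 0; have ha1 := ha 1; have ha2 := ha 2
  simp only [N3, List.mem_cons, List.not_mem_nil, or_false] at hr
  rcases hr with h | h | h | h <;> subst h <;>
    simp only [Matrix.cons_val_zero, Matrix.cons_val_one, Matrix.head_cons,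
      Matrix.cons_val_two, Matrix.tail_cons] at h0 h1 h2 ha0 ha1 ha2 <;> omega

lemma reach_inv {x0 x : State 3} (h : reach N3 x0 x) :
    x 0 + x 1 + x 2 = x0 0 + x0 1 + x0 2 ∧ (1 ≤ x0 1 → 1 ≤ x 1) := by
  induction h with
  | refl => exact ⟨rfl, fun h => h⟩
  | tail _ hs ih =>
    obtain ⟨hsum, hb⟩ := step_inv hs
    exact ⟨by omega, fun h => hb (ih.2 h)⟩

/-- From any state with `B ≥ 1` and mass `≥ 2`, reach a state with `B ≥ 1 ∧ C ≥ 1`. -/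
lemma reach_BC (x : State 3) (hb : 1 ≤ x 1) (hm : 2 ≤ x 0 + x 1 + x 2) :
    ∃ y, reach N3 x y ∧ 1 ≤ y 1 ∧ 1 ≤ y 2 := by
  by_cases hc : 1 ≤ x 2
  · exact ⟨x, Relation.ReflTransGen.refl, hb, hc⟩
  by_cases ha : 1 ≤ x 0
  · refine ⟨![x 0 - 1, x 1, x 2 + 1], Relation.ReflTransGen.single ⟨_, mem0, ?_, ?_⟩, ?_, ?_⟩
    · intro i; fin_cases i <;> simp <;> omega
    · intro i; fin_cases i <;> simp <;> omega
    · simpa using hb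
    · simp
  · have hb2 : 2 ≤ x 1 := by omega
    refine ⟨![x 0, x 1 - 1, x 2 + 1], Relation.ReflTransGen.single ⟨_, mem2, ?_, ?_⟩, ?_, ?_⟩
    · intro i; fin_cases i <;> simp <;> omega
    · intro i; fin_cases i <;> simp <;> omega
    · simp; omega
    · simp

lemma act_reach (x : State 3) (hb : 1 ≤ x 1) (hm : 2 ≤ x 0 + x 1 + x 2) :
    ∀ r ∈ N3, ∃ x', reach N3 x x' ∧ active r.1 x' := by
  obtain ⟨y, hxy, hy1, hy2⟩ := reach_BC x hb hm
  intro r hr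
  simp only [N3, List.mem_cons, List.not_mem_nil, or_false] at hr
  rcases hr with h | h | h | h <;> subst h
  · -- need A ≥ 1, B ≥ 1 : fire C → A from y
    refine ⟨![y 0 + 1, y 1, y 2 - 1],
      hxy.tail ⟨_, mem3, ?_, ?_⟩, ?_⟩
    · intro i; fin_cases i <;> simp <;> omega
    · intro i; fin_cases i <;> simp <;> omega
    · intro i; fin_cases i <;> simp <;> omega
  · exact ⟨y, hxy, fun i => by fin_cases i <;> simp <;> omega⟩
  · -- need B ≥ 2 : fire B+C → 2B from y
    refine ⟨![y 0, y 1 + 1, y 2 - 1],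
      hxy.tail ⟨_, mem1, ?_, ?_⟩, ?_⟩
    · intro i; fin_cases i <;> simp <;> omega
    · intro i; fin_cases i <;> simp <;> omega
    · intro i; fin_cases i <;> simp <;> omega
  · exact ⟨y, hxy, fun i => by fin_cases i <;> simp <;> omega⟩

/-- If `X₂(0) ≥ 1` and the conserved mass is at least 2, then every reachable state has
`x₂ ≥ 1` and no extinction set for any reaction is reachable: no extinction event can occur. -/
theorem no_extinction_N3 (x0 : State 3)
    (hb : 1 ≤ x0 1) (hm : 2 ≤ x0 0 + x0 1 + x0 2) :
    (∀ x, reach N3 x0 x → 1 ≤ x 1) ∧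
    (∀ r ∈ N3, noExtSetReachable N3 r x0) := by
  constructor
  · exact fun x hx => (reach_inv hx).2 hb
  · intro r hr Γ ⟨hcl, hna⟩ x' hx' hreach
    obtain ⟨hsum, hb'⟩ := reach_inv hreach
    obtain ⟨x'', hr2, hact⟩ := act_reach x' (hb' hb) (by omega) r hr
    exact hna x'' (hcl x' hx' x'' hr2) hact
end

section
/- For the stochastic mass action system with species $(A,B,C,D,E)$ and reactions $A+B\to C+E$, $C+E\to B+D$, $B+D\to C+E$, $C\to A$, $B\to D$, $D\to E$, $E\to B$, under discrete reachability: every reachable step preserves $\|x\|_1$ and keeps $x_2+x_4+x_5\geq 1$ if it holds initially (the only reaction decreasing $x_2+x_4+x_5$ is $B+D\to C+E$, requiring $x_2\geq1$ and $x_4\geq1$). If $\|X(0)\|_1 \geq 2$ and $X_2(0)+X_4(0)+X_5(0)\geq 1$, then no extinction set for any of the seven reactions is reachable from $X(0)$. -/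
open Finset

/-- The network A+B → C+E, C+E → B+D, B+D → C+E, C → A, B → D, D → E, E → B. -/
def N5 : List (Rxn 5) :=
  [(![1,1,0,0,0], ![0,0,1,0,1]), (![0,0,1,0,1], ![0,1,0,1,0]), (![0,1,0,1,0], ![0,0,1,0,1]),
   (![0,0,1,0,0], ![1,0,0,0,0]), (![0,1,0,0,0], ![0,0,0,1,0]),
   (![0,0,0,1,0], ![0,0,0,0,1]), (![0,0,0,0,1], ![0,1,0,0,0])]

lemma stepAB (a b c d e : ℕ) (ha : 1 ≤ a) (hb : 1 ≤ b) :
    step N5 ![a,b,c,d,e] ![a-1,b-1,c+1,d,e+1] := by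
  refine ⟨(![1,1,0,0,0], ![0,0,1,0,1]), by simp [N5], fun i => ?_, fun i => ?_⟩ <;>
    fin_cases i <;> simp [active] <;> omega

lemma stepCE (a b c d e : ℕ) (hc : 1 ≤ c) (he : 1 ≤ e) :
    step N5 ![a,b,c,d,e] ![a,b+1,c-1,d+1,e-1] := by
  refine ⟨(![0,0,1,0,1], ![0,1,0,1,0]), by simp [N5], fun i => ?_, fun i => ?_⟩ <;>
    fin_cases i <;> simp [active] <;> omega

lemma stepBD (a b c d e : ℕ) (hb : 1 ≤ b) (hd : 1 ≤ d) :
    step N5 ![a,b,c,d,e] ![a,b-1,c+1,d-1,e+1] := by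
  refine ⟨(![0,1,0,1,0], ![0,0,1,0,1]), by simp [N5], fun i => ?_, fun i => ?_⟩ <;>
    fin_cases i <;> simp [active] <;> omega

lemma stepCA (a b c d e : ℕ) (hc : 1 ≤ c) :
    step N5 ![a,b,c,d,e] ![a+1,b,c-1,d,e] := by
  refine ⟨(![0,0,1,0,0], ![1,0,0,0,0]), by simp [N5], fun i => ?_, fun i => ?_⟩ <;>
    fin_cases i <;> simp [active] <;> omega

lemma stepBtoD (a b c d e : ℕ) (hb : 1 ≤ b) :
    step N5 ![a,b,c,d,e] ![a,b-1,c,d+1,e] := by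
  refine ⟨(![0,1,0,0,0], ![0,0,0,1,0]), by simp [N5], fun i => ?_, fun i => ?_⟩ <;>
    fin_cases i <;> simp [active] <;> omega

lemma stepDtoE (a b c d e : ℕ) (hd : 1 ≤ d) :
    step N5 ![a,b,c,d,e] ![a,b,c,d-1,e+1] := by
  refine ⟨(![0,0,0,1,0], ![0,0,0,0,1]), by simp [N5], fun i => ?_, fun i => ?_⟩ <;>
    fin_cases i <;> simp [active] <;> omega

lemma stepEtoB (a b c d e : ℕ) (he : 1 ≤ e) :
    step N5 ![a,b,c,d,e] ![a,b+1,c,d,e-1] := by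
  refine ⟨(![0,0,0,0,1], ![0,1,0,0,0]), by simp [N5], fun i => ?_, fun i => ?_⟩ <;>
    fin_cases i <;> simp [active] <;> omega

lemma etaState (x : State 5) : x = ![x 0, x 1, x 2, x 3, x 4] := by
  funext i; fin_cases i <;> rfl

lemma mass_step (x x' : State 5) (h : step N5 x x') : ∑ i, x' i = ∑ i, x i := by
  obtain ⟨r, hr, hact, heq⟩ := h
  have e0 := heq 0; have e1 := heq 1; have e2 := heq 2; have e3 := heq 3; have e4 := heq 4
  simp only [N5, List.mem_cons, List.not_mem_nil, or_false] at hr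
  rcases hr with h|h|h|h|h|h|h <;> subst h <;>
    simp at e0 e1 e2 e3 e4 <;> simp [Fin.sum_univ_five] <;> omega

lemma bde_step (x x' : State 5) (h : step N5 x x') (hb : 1 ≤ x 1 + x 3 + x 4) :
    1 ≤ x' 1 + x' 3 + x' 4 := by
  obtain ⟨r, hr, hact, heq⟩ := h
  have e1 := heq 1; have e3 := heq 3; have e4 := heq 4
  have a1 := hact 1; have a3 := hact 3
  simp only [N5, List.mem_cons, List.not_mem_nil, or_false] at hr
  rcases hr with h|h|h|h|h|h|h <;> subst h <;>
    simp at e1 e3 e4 a1 a3 <;> omega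

lemma inv_reach (x x' : State 5) (h : reach N5 x x') :
    (∑ i, x' i = ∑ i, x i) ∧ (1 ≤ x 1 + x 3 + x 4 → 1 ≤ x' 1 + x' 3 + x' 4) := by
  induction h with
  | refl => exact ⟨rfl, id⟩
  | tail hs hstep ih =>
      exact ⟨(mass_step _ _ hstep).trans ih.1, fun h => bde_step _ _ hstep (ih.2 h)⟩

lemma reachCE (x : State 5) (hm : 2 ≤ ∑ i, x i) (hb : 1 ≤ x 1 + x 3 + x 4) :
    ∃ z, reach N5 x z ∧ 1 ≤ z 2 ∧ 1 ≤ z 4 := by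
  rw [Fin.sum_univ_five] at hm
  set a := x 0 with h0; set b := x 1 with h1; set c := x 2 with h2
  set d := x 3 with h3; set e := x 4 with h4
  have hx : x = ![a,b,c,d,e] := etaState x
  rw [hx]
  by_cases hce : 1 ≤ c ∧ 1 ≤ e
  · exact ⟨_, .refl, by simp [hce.1], by simp [hce.2]⟩
  by_cases hbd : 1 ≤ b ∧ 1 ≤ d
  · exact ⟨_, .single (stepBD a b c d e hbd.1 hbd.2), by simp, by simp⟩
  by_cases h2' : 2 ≤ b + d + e
  · -- two tokens among b,d,e; get to b≥1 ∧ d≥1 then fire B+D→C+E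
    by_cases hb2 : 2 ≤ b
    · exact ⟨_, .tail (.single (stepBtoD a b c d e (by omega)))
        (stepBD a (b-1) c (d+1) e (by omega) (by omega)), by simp, by simp⟩
    by_cases hd2 : 2 ≤ d
    · refine ⟨_, .tail (.tail (.single (stepDtoE a b c d e (by omega)))
        (stepEtoB a b c (d-1) (e+1) (by omega)))
        (stepBD a (b+1) c (d-1) e (by omega) (by omega)), by simp, by simp⟩
    by_cases hbe : 1 ≤ b ∧ 1 ≤ e
    · refine ⟨_, .tail (.tail (.single (stepEtoB a b c d e hbe.2))
        (stepBtoD a (b+1) c d (e-1) (by omega)))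
        (stepBD a b c (d+1) (e-1) (by omega) (by omega)), by simp, by simp⟩
    by_cases hde : 1 ≤ d ∧ 1 ≤ e
    · refine ⟨_, .tail (.single (stepEtoB a b c d e hde.2))
        (stepBD a (b+1) c d (e-1) (by omega) hde.1), by simp, by simp⟩
    -- remaining: e ≥ 2, b = d = 0
    have he2 : 2 ≤ e := by omega
    refine ⟨_, .tail (.tail (.tail (.single (stepEtoB a b c d e (by omega)))
      (stepEtoB a (b+1) c d (e-1) (by omega)))
      (stepBtoD a (b+2) c d (e-2) (by omega)))
      (stepBD a (b+1) c (d+1) (e-2) (by omega) (by omega)), by simp, by simp⟩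
  · -- b + d + e = 1
    have h1' : b + d + e = 1 := by omega
    by_cases hc : 1 ≤ c
    · -- move the single token to e, then C is there already; note e = 0 here (else case 1)
      by_cases hbb : 1 ≤ b
      · exact ⟨_, .tail (.single (stepBtoD a b c d e hbb))
          (stepDtoE a (b-1) c (d+1) e (by omega)), by simp [hc], by simp⟩
      by_cases hdd : 1 ≤ d
      · exact ⟨_, .single (stepDtoE a b c d e hdd), by simp [hc], by simp⟩
      · exact ⟨_, .refl, by simp [hc], by simp; omega⟩
    · -- c = 0, so a ≥ 1; move token to b, fire A+B→C+E
      have ha : 1 ≤ a := by omega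
      by_cases hbb : 1 ≤ b
      · exact ⟨_, .single (stepAB a b c d e ha hbb), by simp, by simp⟩
      by_cases hdd : 1 ≤ d
      · refine ⟨_, .tail (.tail (.single (stepDtoE a b c d e hdd))
          (stepEtoB a b c (d-1) (e+1) (by omega)))
          (stepAB a (b+1) c (d-1) e ha (by omega)), by simp, by simp⟩
      · have he : 1 ≤ e := by omega
        refine ⟨_, .tail (.single (stepEtoB a b c d e he))
          (stepAB a (b+1) c d (e-1) ha (by omega)), by simp, by simp⟩

lemma reachActive (r : Rxn 5) (hr : r ∈ N5) (x : State 5) (hc : 1 ≤ x 2) (he : 1 ≤ x 4) :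
    ∃ z, reach N5 x z ∧ active r.1 z := by
  set a := x 0 with h0; set b := x 1 with h1; set c := x 2 with h2
  set d := x 3 with h3; set e := x 4 with h4
  have hx : x = ![a,b,c,d,e] := etaState x
  rw [hx]
  simp only [N5, List.mem_cons, List.not_mem_nil, or_false] at hr
  rcases hr with h|h|h|h|h|h|h <;> subst h
  · -- A+B: C→A then E→B
    refine ⟨_, .tail (.single (stepCA a b c d e hc)) (stepEtoB (a+1) b (c-1) d e he),
      fun i => ?_⟩
    fin_cases i <;> simp <;> omega
  · exact ⟨_, .refl, fun i => by fin_cases i <;> simp <;> omega⟩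
  · exact ⟨_, .single (stepCE a b c d e hc he), fun i => by fin_cases i <;> simp <;> omega⟩
  · exact ⟨_, .refl, fun i => by fin_cases i <;> simp <;> omega⟩
  · exact ⟨_, .single (stepEtoB a b c d e he), fun i => by fin_cases i <;> simp <;> omega⟩
  · exact ⟨_, .single (stepCE a b c d e hc he), fun i => by fin_cases i <;> simp <;> omega⟩
  · exact ⟨_, .refl, fun i => by fin_cases i <;> simp <;> omega⟩

/-- Every step preserves the total mass and preserves `x₂ + x₄ + x₅ ≥ 1`; if the total mass
is at least 2 and `x₂ + x₄ + x₅ ≥ 1` initially, then no extinction set for any of the seven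
reactions is reachable from the initial state. -/
theorem no_extinction_N5 (x0 : State 5)
    (hm : 2 ≤ ∑ i, x0 i) (hb : 1 ≤ x0 1 + x0 3 + x0 4) :
    (∀ x x' : State 5, step N5 x x' → ∑ i, x' i = ∑ i, x i) ∧
    (∀ x x' : State 5, step N5 x x' → 1 ≤ x 1 + x 3 + x 4 → 1 ≤ x' 1 + x' 3 + x' 4) ∧
    (∀ r ∈ N5, noExtSetReachable N5 r x0) := by
  refine ⟨mass_step, bde_step, ?_⟩
  intro r hr Γ hΓ x' hx' hre
  obtain ⟨hcl, hna⟩ := hΓ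
  have hi := inv_reach x0 x' hre
  obtain ⟨z, hz, hzc, hze⟩ := reachCE x' (hi.1 ▸ hm) (hi.2 hb)
  obtain ⟨w, hw, hact⟩ := reachActive r hr z hzc hze
  exact hna w (hcl x' hx' w (hz.trans hw)) hact
end
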